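/- arXiv:1811.04188 — 3 statements merged into one kernel-verified Lean document; each statement's English description precedes it below -/
import Mathlib

section
/- Let f = Γ'/Γ be the digamma function and set c_n = n(n-1)/2. Define meromorphic functions ε_n inductively by ε₁ = 0 and ε_{n+1} = ε_n + ε_n'/f + [(n-2)·f'/f² + f''/(f·f')]·(c_n + ε_n) for n ≥ 1. Then for every n ≥ 1, the identity Γ^{(n)}/Γ = fⁿ·[1 + (f'/f²)·(c_n + ε_n)] holds at every z ∈ ℂ where both sides are defined (i.e. away from the poles of Γ and the zeros of f, f', and Γ). -/
/-- The digamma function `f = Γ'/Γ`. -/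
noncomputable def digammaFn : ℂ → ℂ := fun z => deriv Complex.Gamma z / Complex.Gamma z

/-- The error terms `ε_n`, defined by `ε₁ = 0` and
`ε_{n+1} = ε_n + ε_n'/f + [(n-2)·f'/f² + f''/(f·f')]·(c_n + ε_n)` for `n ≥ 1`,
where `c_n = n(n-1)/2`. (The value at `0` is junk.) -/
noncomputable def epsFn : ℕ → ℂ → ℂ
  | 0 => 0
  | 1 => 0
  | (n + 2) => fun z =>
      epsFn (n + 1) z + deriv (epsFn (n + 1)) z / digammaFn z +
        ((((n : ℂ) + 1) - 2) * deriv digammaFn z / (digammaFn z) ^ 2 +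
            deriv (deriv digammaFn) z / (digammaFn z * deriv digammaFn z)) *
          (((n : ℂ) + 1) * (((n : ℂ) + 1) - 1) / 2 + epsFn (n + 1) z)


def gammaU : Set ℂ := {z : ℂ | ∀ m : ℕ, z ≠ -(m : ℂ)}

lemma gammaU_open : IsOpen gammaU := by
  have hcl : IsClosed (Set.range fun m : ℕ => -(m : ℂ)) := by
    refine (Metric.isClosedEmbedding_of_pairwise_le_dist zero_lt_one ?_).isClosed_range
    intro m n hmn
    rw [Complex.dist_eq]
    have h1 : (-(m : ℂ)) - (-(n : ℂ)) = ((n - m : ℤ) : ℂ) := by push_cast; ring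
    rw [h1, Complex.norm_intCast, ← Int.cast_abs]
    have hne : (n : ℤ) - (m : ℤ) ≠ 0 := sub_ne_zero.2 (by exact_mod_cast hmn.symm)
    exact_mod_cast Int.one_le_abs hne
  have : gammaU = (Set.range fun m : ℕ => -(m : ℂ))ᶜ := by
    ext z; simp [gammaU, eq_comm]
  rw [this]
  exact hcl.isOpen_compl

lemma gamma_analytic : AnalyticOnNhd ℂ Complex.Gamma gammaU :=
  DifferentiableOn.analyticOnNhd
    (fun z hz => (Complex.differentiableAt_Gamma z hz).differentiableWithinAt) gammaU_open

lemma digamma_analytic : AnalyticOnNhd ℂ digammaFn gammaU :=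
  gamma_analytic.deriv.div gamma_analytic fun z hz => Complex.Gamma_ne_zero hz

def gammaS : Set ℂ :=
  {z : ℂ | z ∈ gammaU ∧ digammaFn z ≠ 0 ∧ deriv digammaFn z ≠ 0}

lemma gammaS_subset : gammaS ⊆ gammaU := fun _ h => h.1

lemma gammaS_open : IsOpen gammaS := by
  have h1 : ContinuousOn digammaFn gammaU :=
    fun z hz => ((digamma_analytic z hz).continuousAt).continuousWithinAt
  have h2 : ContinuousOn (deriv digammaFn) gammaU :=
    fun z hz => (((digamma_analytic.deriv) z hz).continuousAt).continuousWithinAt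
  have : gammaS = (gammaU ∩ digammaFn ⁻¹' {0}ᶜ) ∩ (gammaU ∩ deriv digammaFn ⁻¹' {0}ᶜ) := by
    ext z; simp [gammaS]
  rw [this]
  exact (h1.isOpen_inter_preimage gammaU_open isOpen_compl_singleton).inter
    (h2.isOpen_inter_preimage gammaU_open isOpen_compl_singleton)

lemma digamma_analyticS : AnalyticOnNhd ℂ digammaFn gammaS :=
  digamma_analytic.mono gammaS_subset

lemma eps_analytic : ∀ n : ℕ, AnalyticOnNhd ℂ (epsFn n) gammaS := by
  intro n
  induction n using Nat.strong_induction_on with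
  | _ n ih =>
    match n with
    | 0 => exact fun z hz => analyticAt_const
    | 1 => exact fun z hz => analyticAt_const
    | (n + 2) =>
      have he : AnalyticOnNhd ℂ (epsFn (n + 1)) gammaS := ih (n + 1) (by omega)
      have hf := digamma_analyticS
      have hf' := digamma_analyticS.deriv
      have hf'' := digamma_analyticS.deriv.deriv
      intro z hz
      have h0 : digammaFn z ≠ 0 := hz.2.1
      have h1 : deriv digammaFn z ≠ 0 := hz.2.2
      show AnalyticAt ℂ (epsFn (n + 2)) z
      simp only [epsFn]
      exact (((he z hz).add (((he.deriv) z hz).div (hf z hz) h0)).add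
        ((((analyticAt_const.mul (hf' z hz)).div ((hf z hz).pow 2) (pow_ne_zero 2 h0)).add
          ((hf'' z hz).div ((hf z hz).mul (hf' z hz)) (mul_ne_zero h0 h1))).mul
          (analyticAt_const.add (he z hz))))

set_option maxHeartbeats 2000000 in
lemma key_formula : ∀ m : ℕ, ∀ z ∈ gammaS,
    iteratedDeriv (m + 1) Complex.Gamma z =
      Complex.Gamma z * (digammaFn z ^ (m + 1) *
        (1 + deriv digammaFn z / digammaFn z ^ 2 *
          (((m : ℂ) + 1) * (((m : ℂ) + 1) - 1) / 2 + epsFn (m + 1) z))) := by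
  intro m
  induction m with
  | zero =>
    intro z hz
    have hΓ0 : Complex.Gamma z ≠ 0 := Complex.Gamma_ne_zero hz.1
    simp only [zero_add, iteratedDeriv_one, epsFn, digammaFn, Pi.zero_apply, Nat.cast_zero,
      sub_self, mul_zero, add_zero, zero_div]
    field_simp
  | succ m IH =>
    intro z hz
    obtain ⟨hzU, h0, h1⟩ := hz
    have hz' : z ∈ gammaS := ⟨hzU, h0, h1⟩
    have hΓ0 : Complex.Gamma z ≠ 0 := Complex.Gamma_ne_zero hzU
    set c : ℂ := ((m : ℂ) + 1) * (((m : ℂ) + 1) - 1) / 2 with hc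
    rw [iteratedDeriv_succ]
    have heq : iteratedDeriv (m + 1) Complex.Gamma =ᶠ[nhds z]
        (fun w => Complex.Gamma w * (digammaFn w ^ (m + 1) *
          (1 + deriv digammaFn w / digammaFn w ^ 2 * (c + epsFn (m + 1) w)))) :=
      Filter.eventuallyEq_of_mem (gammaS_open.mem_nhds hz') (fun w hw => IH w hw)
    rw [heq.deriv_eq]
    have hfa : HasDerivAt digammaFn (deriv digammaFn z) z :=
      (digamma_analyticS z hz').differentiableAt.hasDerivAt
    have hf'a : HasDerivAt (deriv digammaFn) (deriv (deriv digammaFn) z) z :=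
      ((digamma_analyticS.deriv) z hz').differentiableAt.hasDerivAt
    have hea : HasDerivAt (epsFn (m + 1)) (deriv (epsFn (m + 1)) z) z :=
      ((eps_analytic (m + 1)) z hz').differentiableAt.hasDerivAt
    have hΓd : HasDerivAt Complex.Gamma (deriv Complex.Gamma z) z :=
      (Complex.differentiableAt_Gamma z hzU).hasDerivAt
    have hΓf : deriv Complex.Gamma z = Complex.Gamma z * digammaFn z := by
      unfold digammaFn; field_simp
    have hA := ((hf'a.div (hfa.pow 2) (pow_ne_zero 2 h0)).mul (hea.const_add c)).const_add 1
    have hG := hΓd.mul ((hfa.pow (m + 1)).mul hA)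
    have hG' : HasDerivAt (fun w => Complex.Gamma w * (digammaFn w ^ (m + 1) *
      (1 + deriv digammaFn w / digammaFn w ^ 2 * (c + epsFn (m + 1) w)))) _ z := hG
    rw [hG'.deriv, hΓf]
    simp only [epsFn, Nat.add_sub_cancel, pow_one, Pi.mul_apply, Pi.pow_apply, Pi.div_apply]
    push_cast
    have e1 : digammaFn z ^ (m + 1) = digammaFn z ^ m * digammaFn z := pow_succ _ m
    have e2 : digammaFn z ^ (m + 1 + 1) = digammaFn z ^ m * digammaFn z * digammaFn z := by
      rw [pow_succ, e1]
    rw [e1, e2]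
    generalize digammaFn z ^ m = P
    field_simp
    ring_nf
    field_simp
    ring

/-- For every `n ≥ 1`, `Γ^{(n)}/Γ = fⁿ·[1 + (f'/f²)·(c_n + ε_n)]` with `c_n = n(n-1)/2`,
at every point away from the poles of `Γ` and the zeros of `f`, `f'` and `Γ`. -/
theorem gamma_ratio_formula (n : ℕ) (hn : 1 ≤ n) (z : ℂ)
    (hz : ∀ k : ℕ, z ≠ -(k : ℂ)) (hΓ : Complex.Gamma z ≠ 0)
    (hf : digammaFn z ≠ 0) (hf' : deriv digammaFn z ≠ 0) :
    iteratedDeriv n Complex.Gamma z / Complex.Gamma z =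
      (digammaFn z) ^ n *
        (1 + deriv digammaFn z / (digammaFn z) ^ 2 *
          ((n : ℂ) * ((n : ℂ) - 1) / 2 + epsFn n z)) := by
  obtain ⟨m, rfl⟩ : ∃ m, n = m + 1 := ⟨n - 1, by omega⟩
  have hzS : z ∈ gammaS := ⟨hz, hf, hf'⟩
  rw [key_formula m z hzS]
  push_cast
  rw [mul_comm (Complex.Gamma z), mul_div_assoc, div_self hΓ, mul_one]
end

section
/- For every z ∈ ℂ with Re z > 0, the digamma function satisfies f(z) = Γ'(z)/Γ(z) = log z − 1/(2z) − ∫₀^{+∞} (⌊t⌋ − t + 1/2)/(t+z)² dt. -/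
open Complex Filter MeasureTheory Set Topology

noncomputable section


-- from t2.lean

lemma aux_ne (z : ℂ) (hz : 0 < z.re) (j : ℕ) : z + (j:ℂ) ≠ 0 := by
  intro h
  have h2 := congrArg Complex.re h
  simp only [Complex.add_re, Complex.natCast_re, Complex.zero_re] at h2
  have : (0:ℝ) ≤ (j:ℝ) := Nat.cast_nonneg j
  linarith

lemma logDeriv_gammaSeq {z : ℂ} (hz : 0 < z.re) {n : ℕ} (hn : n ≠ 0) :
    logDeriv (fun s => Complex.GammaSeq s n) z
      = Complex.log n - ∑ j ∈ Finset.range (n + 1), 1 / (z + j) := by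
  have hnn : (n:ℂ) ≠ 0 := Nat.cast_ne_zero.mpr hn
  have hcz : ∀ w : ℂ, (n:ℂ) ^ w ≠ 0 := fun w => by
    simp [Complex.cpow_eq_zero_iff, hnn]
  have hfact : ((n.factorial : ℂ)) ≠ 0 := Nat.cast_ne_zero.mpr n.factorial_ne_zero
  have hprod : (∏ j ∈ Finset.range (n + 1), (z + (j:ℂ))) ≠ 0 :=
    Finset.prod_ne_zero_iff.mpr fun j _ => aux_ne z hz j
  have hdpow : DifferentiableAt ℂ (fun s : ℂ => (n:ℂ) ^ s) z :=
    differentiableAt_id.const_cpow (Or.inl hnn)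
  have hstep : logDeriv (fun s => Complex.GammaSeq s n) z =
      logDeriv (fun s : ℂ => (n:ℂ) ^ s * (n.factorial : ℂ)) z -
        logDeriv (fun s : ℂ => ∏ j ∈ Finset.range (n + 1), (s + (j:ℂ))) z := by
    have := logDeriv_div (f := fun s : ℂ => (n:ℂ) ^ s * (n.factorial : ℂ))
      (g := fun s : ℂ => ∏ j ∈ Finset.range (n + 1), (s + (j:ℂ))) z
      (mul_ne_zero (hcz z) hfact) hprod (hdpow.mul_const _)
      (DifferentiableAt.fun_finsetProd fun j _ => differentiableAt_id.add_const _)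
    rw [← this]
    rfl
  rw [hstep, logDeriv_mul_const _ _ hfact,
    logDeriv_prod (f := fun (j:ℕ) (s:ℂ) => s + (j:ℂ)) (fun j _ => aux_ne z hz j)
      (fun j _ => differentiableAt_id.add_const _)]
  congr 1
  · rw [logDeriv_apply, (hasStrictDerivAt_const_cpow (Or.inl hnn)).hasDerivAt.deriv,
      mul_comm, mul_div_assoc, div_self (hcz z), mul_one]
  · refine Finset.sum_congr rfl fun j _ => ?_
    rw [logDeriv_apply]
    simp [deriv_add_const]

-- from t4.lean

noncomputable def gApprox (n : ℕ) : ℝ → ℝ :=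
  Set.indicator (Set.Ioc (0:ℝ) (n:ℝ)) (fun x => (1 - x / n) ^ n)

lemma gApprox_nonneg (n : ℕ) (t : ℝ) : 0 ≤ gApprox n t := by
  unfold gApprox
  by_cases h : t ∈ Set.Ioc (0:ℝ) (n:ℝ)
  · rw [Set.indicator_of_mem h]
    have : t / n ≤ 1 := div_le_one_of_le₀ h.2 (Nat.cast_nonneg n)
    exact pow_nonneg (by linarith) n
  · rw [Set.indicator_of_notMem h]

lemma gApprox_le_exp (n : ℕ) (t : ℝ) : gApprox n t ≤ Real.exp (-t) := by
  unfold gApprox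
  by_cases h : t ∈ Set.Ioc (0:ℝ) (n:ℝ)
  · rw [Set.indicator_of_mem h]
    exact Real.one_sub_div_pow_le_exp_neg h.2
  · rw [Set.indicator_of_notMem h]
    positivity

lemma gApprox_measurable (n : ℕ) : Measurable (gApprox n) :=
  ((continuous_const.sub (continuous_id'.div_const (n:ℝ))).pow n).measurable.indicator
    measurableSet_Ioc

lemma gApprox_tendsto (t : ℝ) (ht : 0 < t) :
    Tendsto (fun n : ℕ => gApprox n t) atTop (𝓝 (Real.exp (-t))) := by
  have h1 : Tendsto (fun n : ℕ => (1 - t / n) ^ n) atTop (𝓝 (Real.exp (-t))) := by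
    have := Real.tendsto_one_add_div_pow_exp (-t)
    simpa [neg_div, sub_eq_add_neg] using this
  refine h1.congr' ?_
  filter_upwards [eventually_ge_atTop ⌈t⌉₊] with n hn
  rw [Nat.ceil_le] at hn
  simp only [gApprox]
  exact (Set.indicator_of_mem (Set.mem_Ioc.mpr ⟨ht, hn⟩)
    (fun x : ℝ => (1 - x / (n:ℝ)) ^ n)).symm

lemma integrable_gApprox_mul {c : ℝ} (hc : 0 < c) (n : ℕ) :
    IntegrableOn (fun t => gApprox n t * t ^ (c - 1)) (Set.Ioi (0:ℝ)) := by
  refine Integrable.mono' (Real.GammaIntegral_convergent hc)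
    (((gApprox_measurable n).mul (measurable_id.pow_const _)).aestronglyMeasurable) ?_
  filter_upwards [ae_restrict_mem measurableSet_Ioi] with t ht
  rw [Real.norm_eq_abs, abs_mul, _root_.abs_of_nonneg (gApprox_nonneg n t),
    _root_.abs_of_nonneg (Real.rpow_nonneg (le_of_lt ht) _)]
  exact mul_le_mul_of_nonneg_right (gApprox_le_exp n t) (Real.rpow_nonneg (le_of_lt ht) _)

/-- difference integral tends to 0 -/
lemma diff_integral_tendsto_zero {c : ℝ} (hc : 0 < c) :
    Tendsto (fun n : ℕ => ∫ t in Set.Ioi (0:ℝ), (Real.exp (-t) - gApprox n t) * t ^ (c - 1))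
      atTop (𝓝 0) := by
  have h := tendsto_integral_of_dominated_convergence
    (fun t => Real.exp (-t) * t ^ (c - 1))
    (F := fun n t => (Real.exp (-t) - gApprox n t) * t ^ (c - 1))
    (f := fun _ => (0:ℝ)) (μ := volume.restrict (Set.Ioi (0:ℝ)))
    (fun n => ((((Real.continuous_exp.comp continuous_neg).measurable).sub (gApprox_measurable n)).mul
      (measurable_id.pow_const _)).aestronglyMeasurable)
    (Real.GammaIntegral_convergent hc) ?_ ?_
  · simpa using h
  · intro n
    filter_upwards [ae_restrict_mem measurableSet_Ioi] with t ht
    rw [Real.norm_eq_abs, abs_mul, _root_.abs_of_nonneg (Real.rpow_nonneg (le_of_lt ht) _),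
      _root_.abs_of_nonneg (by linarith [gApprox_le_exp n t] : (0:ℝ) ≤ Real.exp (-t) - gApprox n t)]
    exact mul_le_mul_of_nonneg_right (by linarith [gApprox_nonneg n t])
      (Real.rpow_nonneg (le_of_lt ht) _)
  · filter_upwards [ae_restrict_mem measurableSet_Ioi] with t ht
    have := (gApprox_tendsto t ht).const_sub (Real.exp (-t))
    simpa using this.mul_const (t ^ (c - 1))

-- from t5.lean



lemma cpow_fun_aesm {s : ℂ} :
    AEStronglyMeasurable (fun t : ℝ => (t:ℂ) ^ (s - 1))
      (volume.restrict (Set.Ioi (0:ℝ))) := by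
  refine (ContinuousOn.aestronglyMeasurable ?_ measurableSet_Ioi)
  apply continuousOn_of_forall_continuousAt
  intro x hx
  exact (continuousAt_cpow_const <| Complex.ofReal_mem_slitPlane.2 hx).comp
    Complex.continuous_ofReal.continuousAt

lemma gApprox_cx_aesm {s : ℂ} (n : ℕ) :
    AEStronglyMeasurable (fun t : ℝ => ((gApprox n t : ℂ)) * (t:ℂ) ^ (s - 1))
      (volume.restrict (Set.Ioi (0:ℝ))) :=
  ((Complex.measurable_ofReal.comp (gApprox_measurable n)).aestronglyMeasurable).mul cpow_fun_aesm

lemma integrable_gApprox_cx {s : ℂ} (hs : 0 < s.re) (n : ℕ) :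
    IntegrableOn (fun t : ℝ => ((gApprox n t : ℂ)) * (t:ℂ) ^ (s - 1)) (Set.Ioi (0:ℝ)) := by
  refine Integrable.mono' (Real.GammaIntegral_convergent hs) (gApprox_cx_aesm n) ?_
  filter_upwards [ae_restrict_mem measurableSet_Ioi] with t ht
  rw [norm_mul, Complex.norm_real, Real.norm_eq_abs,
    Complex.norm_cpow_eq_rpow_re_of_pos ht, _root_.abs_of_nonneg (gApprox_nonneg n t),
    Complex.sub_re, Complex.one_re]
  exact mul_le_mul_of_nonneg_right (gApprox_le_exp n t) (Real.rpow_nonneg ht.le _)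

lemma gammaSeq_eq_integral {s : ℂ} (hs : 0 < s.re) {n : ℕ} (hn : n ≠ 0) :
    Complex.GammaSeq s n = ∫ t in Set.Ioi (0:ℝ), ((gApprox n t : ℂ)) * (t:ℂ) ^ (s - 1) := by
  calc Complex.GammaSeq s n
      = ∫ x in Set.Ioc (0:ℝ) (n:ℝ), ((((1 - x / n) ^ n : ℝ)):ℂ) * (x:ℂ) ^ (s - 1) := by
        rw [Complex.GammaSeq_eq_approx_Gamma_integral hs hn,
          intervalIntegral.integral_of_le (by positivity : (0:ℝ) ≤ (n:ℝ))]
    _ = ∫ x in Set.Ioi (0:ℝ), Set.indicator (Set.Ioc (0:ℝ) (n:ℝ))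
          (fun x : ℝ => ((((1 - x / n) ^ n : ℝ)):ℂ) * (x:ℂ) ^ (s - 1)) x := by
        rw [MeasureTheory.integral_indicator measurableSet_Ioc,
          Measure.restrict_restrict_of_subset Set.Ioc_subset_Ioi_self]
    _ = ∫ t in Set.Ioi (0:ℝ), ((gApprox n t : ℂ)) * (t:ℂ) ^ (s - 1) := by
        refine setIntegral_congr_fun measurableSet_Ioi fun t _ => ?_
        by_cases h : t ∈ Set.Ioc (0:ℝ) (n:ℝ)
        · rw [Set.indicator_of_mem h, gApprox, Set.indicator_of_mem h]
        · rw [Set.indicator_of_notMem h, gApprox, Set.indicator_of_notMem h,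
            Complex.ofReal_zero, zero_mul]

lemma rpow_le_sum_rpow {a b t : ℝ} (ht : 0 < t) {c : ℝ} (hac : a ≤ c) (hcb : c ≤ b) :
    t ^ (c - 1) ≤ t ^ (a - 1) + t ^ (b - 1) := by
  rcases le_total t 1 with h1 | h1
  · have := Real.rpow_le_rpow_of_exponent_ge ht h1 (by linarith : a - 1 ≤ c - 1)
    have h2 : (0:ℝ) ≤ t ^ (b - 1) := Real.rpow_nonneg ht.le _
    linarith
  · have := Real.rpow_le_rpow_of_exponent_le h1 (by linarith : c - 1 ≤ b - 1)
    have h2 : (0:ℝ) ≤ t ^ (a - 1) := Real.rpow_nonneg ht.le _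
    linarith

lemma key_bound {a b : ℝ} (ha : 0 < a) (hb : 0 < b) {s : ℂ} (has : a ≤ s.re) (hsb : s.re ≤ b)
    {n : ℕ} (hn : n ≠ 0) :
    ‖Complex.GammaSeq s n - Complex.Gamma s‖ ≤
      (∫ t in Set.Ioi (0:ℝ), (Real.exp (-t) - gApprox n t) * t ^ (a - 1)) +
      (∫ t in Set.Ioi (0:ℝ), (Real.exp (-t) - gApprox n t) * t ^ (b - 1)) := by
  have hs : 0 < s.re := lt_of_lt_of_le ha has
  have hint : IntegrableOn (fun x : ℝ => ((Real.exp (-x) : ℝ) : ℂ) * (x:ℂ) ^ (s - 1))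
      (Set.Ioi (0:ℝ)) := Complex.GammaIntegral_convergent hs
  have hdiffint : ∀ c : ℝ, 0 < c → IntegrableOn
      (fun t : ℝ => (Real.exp (-t) - gApprox n t) * t ^ (c - 1)) (Set.Ioi (0:ℝ)) := by
    intro c hc
    have := ((Real.GammaIntegral_convergent hc).sub (integrable_gApprox_mul hc n))
    refine this.congr (ae_of_all _ fun t => by simp only [Pi.sub_apply]; ring)
  have heq : Complex.GammaSeq s n - Complex.Gamma s =
      ∫ t in Set.Ioi (0:ℝ), (((gApprox n t : ℝ) : ℂ) - ((Real.exp (-t) : ℝ) : ℂ))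
        * (t:ℂ) ^ (s - 1) := by
    rw [gammaSeq_eq_integral hs hn, Complex.Gamma_eq_integral hs, Complex.GammaIntegral,
      ← MeasureTheory.integral_sub (integrable_gApprox_cx hs n) hint]
    refine setIntegral_congr_fun measurableSet_Ioi fun t _ => by ring
  rw [heq]
  refine le_trans (MeasureTheory.norm_integral_le_integral_norm _) ?_
  have hmono : ∫ t in Set.Ioi (0:ℝ),
        ‖(((gApprox n t : ℝ) : ℂ) - ((Real.exp (-t) : ℝ) : ℂ)) * (t:ℂ) ^ (s - 1)‖ ≤
      ∫ t in Set.Ioi (0:ℝ), ((Real.exp (-t) - gApprox n t) * t ^ (a - 1) +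
        (Real.exp (-t) - gApprox n t) * t ^ (b - 1)) := by
    refine MeasureTheory.integral_mono_of_nonneg (ae_of_all _ fun t => norm_nonneg _)
      ((hdiffint a ha).add (hdiffint b hb)) ?_
    filter_upwards [ae_restrict_mem measurableSet_Ioi] with t ht
    have hge : 0 ≤ Real.exp (-t) - gApprox n t := by linarith [gApprox_le_exp n t]
    rw [norm_mul, ← Complex.ofReal_sub, Complex.norm_real, Real.norm_eq_abs,
      Complex.norm_cpow_eq_rpow_re_of_pos ht, Complex.sub_re,
      Complex.one_re, abs_sub_comm, _root_.abs_of_nonneg hge, ← mul_add]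
    exact mul_le_mul_of_nonneg_left (rpow_le_sum_rpow ht has hsb) hge
  refine le_trans hmono ?_
  rw [MeasureTheory.integral_add (hdiffint a ha) (hdiffint b hb)]

lemma tlu_gammaSeq : TendstoLocallyUniformlyOn (fun (n : ℕ) (s : ℂ) => Complex.GammaSeq s n)
    Complex.Gamma atTop {s : ℂ | 0 < s.re} := by
  have hopen : IsOpen {s : ℂ | 0 < s.re} := isOpen_lt continuous_const Complex.continuous_re
  rw [tendstoLocallyUniformlyOn_iff_forall_isCompact hopen]
  intro K hK hKc
  rcases K.eq_empty_or_nonempty with rfl | hne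
  · simp [tendstoUniformlyOn_empty]
  obtain ⟨sa, hsaK, hmin⟩ := hKc.exists_isMinOn hne Complex.continuous_re.continuousOn
  obtain ⟨sb, hsbK, hmax⟩ := hKc.exists_isMaxOn hne Complex.continuous_re.continuousOn
  have ha : 0 < sa.re := hK hsaK
  have hb : 0 < sb.re := hK hsbK
  rw [Metric.tendstoUniformlyOn_iff]
  intro ε hε
  have hsum : Tendsto (fun n : ℕ =>
      (∫ t in Set.Ioi (0:ℝ), (Real.exp (-t) - gApprox n t) * t ^ (sa.re - 1)) +
      (∫ t in Set.Ioi (0:ℝ), (Real.exp (-t) - gApprox n t) * t ^ (sb.re - 1)))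
      atTop (𝓝 0) := by
    simpa using (diff_integral_tendsto_zero ha).add (diff_integral_tendsto_zero hb)
  filter_upwards [hsum.eventually (eventually_lt_nhds hε),
    eventually_ge_atTop 1] with n hn hn1
  intro s hsK
  have hbound := key_bound ha hb (hmin hsK) (hmax hsK) (Nat.one_le_iff_ne_zero.mp hn1) (s := s)
  rw [dist_eq_norm, norm_sub_rev]  -- dist (Gamma s) (GammaSeq s n)
  exact lt_of_le_of_lt hbound (by simpa using hn)

-- from t7.lean

lemma gammaSeq_differentiableOn {n : ℕ} (hn : n ≠ 0) :
    DifferentiableOn ℂ (fun s => Complex.GammaSeq s n) {s : ℂ | 0 < s.re} := by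
  have : (fun s => Complex.GammaSeq s n)
      = fun s : ℂ => (n:ℂ) ^ s * (n.factorial : ℂ) / ∏ j ∈ Finset.range (n + 1), (s + j) := rfl
  rw [this]
  refine DifferentiableOn.div ?_ ?_ ?_
  · exact ((differentiable_id.const_cpow (Or.inl (Nat.cast_ne_zero.mpr hn))).mul_const _).differentiableOn
  · exact (Differentiable.differentiableOn (by
      exact Differentiable.fun_finsetProd fun j _ => differentiable_id.add_const _))
  · intro s hs
    exact Finset.prod_ne_zero_iff.mpr fun j _ => aux_ne s hs j

lemma digamma_limit {z : ℂ} (hz : 0 < z.re) :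
    Tendsto (fun n : ℕ => Complex.log n - ∑ j ∈ Finset.range (n + 1), 1 / (z + j)) atTop
      (𝓝 (deriv Complex.Gamma z / Complex.Gamma z)) := by
  have hopen : IsOpen {s : ℂ | 0 < s.re} := isOpen_lt continuous_const Complex.continuous_re
  have hGne : Complex.Gamma z ≠ 0 := by
    refine Complex.Gamma_ne_zero fun m => ?_
    intro h
    rw [h] at hz
    simp only [Complex.neg_re, Complex.natCast_re] at hz
    have : (0:ℝ) ≤ (m:ℝ) := Nat.cast_nonneg m
    linarith
  have h := Complex.logDeriv_tendsto (f := fun (n : ℕ) (s : ℂ) => Complex.GammaSeq s n)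
    (g := Complex.Gamma) hopen (x := z) hz tlu_gammaSeq ?_ hGne
  · have h2 : Tendsto (fun n : ℕ => Complex.log n - ∑ j ∈ Finset.range (n + 1), 1 / (z + j))
        atTop (𝓝 (logDeriv Complex.Gamma z)) := by
      refine h.congr' ?_
      filter_upwards [eventually_ge_atTop 1] with n hn
      exact logDeriv_gammaSeq hz (Nat.one_le_iff_ne_zero.mp hn)
    simpa [logDeriv_apply] using h2
  · filter_upwards [eventually_ge_atTop 1] with n hn
    exact gammaSeq_differentiableOn (Nat.one_le_iff_ne_zero.mp hn)

-- from t8.lean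

lemma aux_ne' (z : ℂ) (hz : 0 < z.re) (t : ℝ) (ht : 0 ≤ t) : (t:ℂ) + z ≠ 0 := by
  intro h
  have h2 := congrArg Complex.re h
  simp only [Complex.add_re, Complex.ofReal_re, Complex.zero_re] at h2
  linarith

lemma integrable_inv_sq_shift {a : ℝ} (ha : 0 < a) :
    IntegrableOn (fun t : ℝ => (((t + a) ^ 2)⁻¹ : ℝ)) (Set.Ioi (0:ℝ)) := by
  have hderiv : ∀ x ∈ Set.Ioi (0:ℝ), HasDerivAt (fun t : ℝ => -(t + a)⁻¹) (((x + a) ^ 2)⁻¹) x := by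
    intro x hx
    have hne : x + a ≠ 0 := by simp only [Set.mem_Ioi] at hx; positivity
    have := ((hasDerivAt_id x).add_const a).inv hne
    refine this.neg.congr_deriv ?_
    simp only [id, neg_div, neg_neg, one_div]
  refine integrableOn_Ioi_deriv_of_nonneg (l := 0) ?_ hderiv (fun x hx => by positivity) ?_
  · exact ((((continuous_id.add continuous_const).continuousAt).inv₀
      (by positivity : (0:ℝ) + a ≠ 0)).neg).continuousWithinAt
  · rw [show (0:ℝ) = -0 by ring]
    exact (tendsto_inv_atTop_zero.comp (tendsto_atTop_add_const_right _ a tendsto_id)).neg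

lemma norm_saw_le {z : ℂ} (hz : 0 < z.re) {t : ℝ} (ht : 0 < t) :
    ‖((((⌊t⌋ : ℝ) - t + 1 / 2 : ℝ)) : ℂ) / ((t : ℂ) + z) ^ 2‖
      ≤ (1/2) * (((t + z.re) ^ 2)⁻¹ : ℝ) := by
  rw [norm_div, norm_pow, Complex.norm_real, Real.norm_eq_abs]
  have h1 : |(⌊t⌋ : ℝ) - t + 1 / 2| ≤ 1 / 2 := by
    have h2 := Int.fract_nonneg t
    have h3 := Int.fract_lt_one t
    rw [Int.fract] at h2 h3
    rw [abs_le]; constructor <;> linarith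
  have h4 : (t + z.re) ≤ ‖(t:ℂ) + z‖ := by
    have := Complex.re_le_norm ((t:ℂ) + z)
    simpa using this
  have h5 : (0:ℝ) < t + z.re := by linarith
  have h6 : (t + z.re) ^ 2 ≤ ‖(t:ℂ) + z‖ ^ 2 := by
    exact pow_le_pow_left₀ h5.le h4 2
  rw [div_eq_mul_inv]
  refine mul_le_mul h1 ?_ (by positivity) (by norm_num)
  exact inv_anti₀ (by positivity) h6

lemma saw_aesm (z : ℂ) : AEStronglyMeasurable
    (fun t : ℝ => ((((⌊t⌋ : ℝ) - t + 1 / 2 : ℝ)) : ℂ) / ((t : ℂ) + z) ^ 2)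
    (volume.restrict (Set.Ioi (0:ℝ))) := by
  have h1 : Measurable fun t : ℝ => (((⌊t⌋ : ℝ) - t + 1 / 2 : ℝ)) := by
    have : (fun t : ℝ => ((⌊t⌋ : ℝ) - t + 1 / 2)) = fun t => 1 / 2 - Int.fract t := by
      funext t; rw [Int.fract]; ring
    rw [this]
    exact measurable_const.sub measurable_fract
  exact ((Complex.measurable_ofReal.comp h1).div
    (((Complex.continuous_ofReal.add continuous_const).pow 2).measurable)).aestronglyMeasurable

lemma saw_integrable {z : ℂ} (hz : 0 < z.re) :
    IntegrableOn (fun t : ℝ => ((((⌊t⌋ : ℝ) - t + 1 / 2 : ℝ)) : ℂ) / ((t : ℂ) + z) ^ 2)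
      (Set.Ioi (0:ℝ)) := by
  refine Integrable.mono' ((integrable_inv_sq_shift hz).const_mul (1/2)) (saw_aesm z) ?_
  filter_upwards [ae_restrict_mem measurableSet_Ioi] with t ht
  exact norm_saw_le hz ht

-- from t9.lean

lemma hasDerivAt_F (z : ℂ) (hz : 0 < z.re) (c : ℂ) (t : ℝ) (ht : 0 ≤ t) :
    HasDerivAt (fun u : ℝ => -(c * ((u:ℂ) + z)⁻¹) - Complex.log ((u:ℂ) + z))
      ((c - ((t:ℂ) + z)) / ((t:ℂ) + z) ^ 2) t := by
  have hne : (t:ℂ) + z ≠ 0 := aux_ne' z hz t ht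
  have hslit : (t:ℂ) + z ∈ Complex.slitPlane := by
    refine Complex.mem_slitPlane_iff.mpr (Or.inl ?_)
    simp only [Complex.add_re, Complex.ofReal_re]
    linarith
  have he1 : HasDerivAt (fun w : ℂ => w + z) 1 (t:ℂ) := (hasDerivAt_id _).add_const z
  have hinv : HasDerivAt (fun w : ℂ => (w + z)⁻¹) (-1 / ((t:ℂ) + z) ^ 2) (t:ℂ) := by
    exact he1.inv hne
  have hlog : HasDerivAt (fun w : ℂ => Complex.log (w + z)) (((t:ℂ) + z)⁻¹) (t:ℂ) := by
    have := (Complex.hasDerivAt_log hslit).comp (t:ℂ) he1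
    rw [mul_one] at this
    exact this
  have h := ((hinv.const_mul c).neg.sub hlog).comp_ofReal
  convert h using 1
  · rfl
  field_simp

lemma step_integral {z : ℂ} (hz : 0 < z.re) (n : ℕ) :
    ∫ t in (n:ℝ)..((n:ℝ)+1), ((((⌊t⌋ : ℝ) - t + 1 / 2 : ℝ)) : ℂ) / ((t : ℂ) + z) ^ 2
      = (1/2) * (1 / (z + (n:ℂ)) + 1 / (z + (n:ℂ) + 1))
        - (Complex.log ((n:ℂ) + 1 + z) - Complex.log ((n:ℂ) + z)) := by
  have hn0 : (0:ℝ) ≤ (n:ℝ) := Nat.cast_nonneg n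
  set c : ℂ := (n:ℂ) + 1/2 + z with hc
  -- replace floor by n a.e.
  have hcong : ∫ t in (n:ℝ)..((n:ℝ)+1), ((((⌊t⌋ : ℝ) - t + 1 / 2 : ℝ)) : ℂ) / ((t : ℂ) + z) ^ 2
      = ∫ t in (n:ℝ)..((n:ℝ)+1), (c - ((t:ℂ) + z)) / ((t:ℂ) + z) ^ 2 := by
    refine intervalIntegral.integral_congr_ae ?_
    have hne : ∀ᵐ t : ℝ, t ≠ (n:ℝ) + 1 := by
      refine ae_iff.mpr ?_
      have : {x : ℝ | ¬x ≠ (n:ℝ) + 1} = {(n:ℝ) + 1} := by ext x; simp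
      rw [this, measure_singleton]
    filter_upwards [hne] with t htne hmem
    rw [Set.uIoc_of_le (by linarith : (n:ℝ) ≤ (n:ℝ)+1)] at hmem
    have hfl : ⌊t⌋ = (n:ℤ) := by
      rw [Int.floor_eq_iff]
      constructor
      · exact_mod_cast le_of_lt hmem.1
      · push_cast
        rcases lt_or_eq_of_le hmem.2 with h | h
        · exact h
        · exact absurd h htne
    rw [hfl]
    push_cast
    rw [hc]
    ring_nf
  rw [hcong]
  have hFTC := intervalIntegral.integral_eq_sub_of_hasDerivAt
    (f := fun u : ℝ => -(c * ((u:ℂ) + z)⁻¹) - Complex.log ((u:ℂ) + z))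
    (f' := fun t : ℝ => (c - ((t:ℂ) + z)) / ((t:ℂ) + z) ^ 2)
    (a := (n:ℝ)) (b := (n:ℝ)+1) ?_ ?_
  · rw [hFTC]
    have h1 : ((n:ℝ):ℂ) + z ≠ 0 := aux_ne' z hz _ hn0
    have h2 : (((n:ℝ)+1:ℝ):ℂ) + z ≠ 0 := aux_ne' z hz _ (by linarith)
    have h1' : z + (n:ℂ) ≠ 0 := by rwa [add_comm]
    have h2' : z + (n:ℂ) + 1 ≠ 0 := by
      intro h; apply h2; push_cast; linear_combination h
    push_cast at h1 h2 ⊢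
    have key : -(c * ((n:ℂ) + 1 + z)⁻¹) + c * ((n:ℂ) + z)⁻¹
        = 1/2 * (1 / (z + (n:ℂ)) + 1 / (z + (n:ℂ) + 1)) := by
      rw [hc]
      field_simp
      ring
    linear_combination key
  · intro t htmem
    rw [Set.uIcc_of_le (by linarith : (n:ℝ) ≤ (n:ℝ)+1)] at htmem
    exact hasDerivAt_F z hz c t (le_trans hn0 htmem.1)
  · refine ContinuousOn.intervalIntegrable ?_
    refine ContinuousOn.div ?_ ?_ ?_
    · exact (continuous_const.sub (Complex.continuous_ofReal.add continuous_const)).continuousOn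
    · exact ((Complex.continuous_ofReal.add continuous_const).pow 2).continuousOn
    · intro t htmem
      rw [Set.uIcc_of_le (by linarith : (n:ℝ) ≤ (n:ℝ)+1)] at htmem
      exact pow_ne_zero 2 (aux_ne' z hz t (le_trans hn0 htmem.1))

-- from t10.lean

lemma saw_intervalIntegrable {z : ℂ} (hz : 0 < z.re) {a b : ℝ} (ha : 0 ≤ a) (hab : a ≤ b) :
    IntervalIntegrable (fun t : ℝ => ((((⌊t⌋ : ℝ) - t + 1 / 2 : ℝ)) : ℂ) / ((t : ℂ) + z) ^ 2)
      volume a b := by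
  rw [intervalIntegrable_iff_integrableOn_Ioc_of_le hab]
  exact (saw_integrable hz).mono_set (fun t htm => lt_of_le_of_lt ha htm.1)

lemma partial_eq {z : ℂ} (hz : 0 < z.re) (N : ℕ) :
    ∫ t in (0:ℝ)..(N:ℝ), ((((⌊t⌋ : ℝ) - t + 1 / 2 : ℝ)) : ℂ) / ((t : ℂ) + z) ^ 2
      = (∑ j ∈ Finset.range (N+1), 1 / (z + (j:ℂ))) - 1/(2*z) - 1/(2*((N:ℂ)+z))
        - Complex.log ((N:ℂ)+z) + Complex.log z := by
  induction N with
  | zero =>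
    have hz0 : z ≠ 0 := by
      have := aux_ne z hz 0; simpa using this
    simp only [Nat.cast_zero, intervalIntegral.integral_same, Finset.range_one,
      Finset.sum_singleton, Nat.cast_zero, add_zero, zero_add]
    field_simp
    ring
  | succ N ih =>
    have hsplit : ∫ t in (0:ℝ)..((N+1:ℕ):ℝ), ((((⌊t⌋ : ℝ) - t + 1 / 2 : ℝ)) : ℂ) / ((t : ℂ) + z) ^ 2
        = (∫ t in (0:ℝ)..(N:ℝ), ((((⌊t⌋ : ℝ) - t + 1 / 2 : ℝ)) : ℂ) / ((t : ℂ) + z) ^ 2)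
          + ∫ t in (N:ℝ)..((N:ℝ)+1), ((((⌊t⌋ : ℝ) - t + 1 / 2 : ℝ)) : ℂ) / ((t : ℂ) + z) ^ 2 := by
      rw [show ((N+1:ℕ):ℝ) = (N:ℝ)+1 by push_cast; ring]
      exact (intervalIntegral.integral_add_adjacent_intervals
        (saw_intervalIntegrable hz le_rfl (Nat.cast_nonneg N))
        (saw_intervalIntegrable hz (Nat.cast_nonneg N)
          (by linarith [Nat.cast_nonneg (α := ℝ) N]))).symm
    rw [hsplit, ih, step_integral hz N]
    conv_rhs => rw [Finset.sum_range_succ]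
    push_cast
    have h2 : z + (N:ℂ) ≠ 0 := by have := aux_ne z hz N; simpa using this
    have h1 : z + (N:ℂ) + 1 ≠ 0 := by
      have h := aux_ne z hz (N+1); push_cast at h; rwa [← add_assoc] at h
    have e1 : (1:ℂ)/(2*((N:ℂ)+z)) = 1/2 * (1/(z+(N:ℂ))) := by
      rw [add_comm (N:ℂ) z, div_mul_div_comm]; norm_num
    have e2 : (1:ℂ)/(2*((N:ℂ)+1+z)) = 1/2 * (1/(z+(N:ℂ)+1)) := by
      rw [show (N:ℂ)+1+z = z+(N:ℂ)+1 by ring, div_mul_div_comm]; norm_num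
    have e3 : (1:ℂ)/(z+((N:ℂ)+1)) = 1/(z+(N:ℂ)+1) := by rw [add_assoc]
    linear_combination e2 - e1 + e3

-- from t11.lean

lemma log_ratio_tendsto {z : ℂ} (hz : 0 < z.re) :
    Tendsto (fun n : ℕ => Complex.log ((n:ℂ) + z) - Complex.log n) atTop (𝓝 0) := by
  have hdiv : Tendsto (fun n : ℕ => z / (n:ℂ)) atTop (𝓝 0) := by
    refine squeeze_zero_norm' ?_
      ((tendsto_one_div_atTop_nhds_zero_nat.const_mul ‖z‖).congr (fun n => rfl) |>.mono_right
        (le_of_eq (by norm_num)))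
    · filter_upwards [eventually_ge_atTop 1] with n hn
      rw [norm_div, Complex.norm_natCast]
      rw [div_eq_mul_one_div]
  have h1 : Tendsto (fun n : ℕ => 1 + z / (n:ℂ)) atTop (𝓝 1) := by
    simpa using tendsto_const_nhds.add hdiv
  have hcont : Tendsto (fun n : ℕ => Complex.log (1 + z / (n:ℂ))) atTop (𝓝 0) := by
    have h2 := (continuousAt_clog Complex.one_mem_slitPlane).tendsto.comp h1
    rw [Complex.log_one] at h2
    exact h2
  refine hcont.congr' ?_ |>.mono_right (le_of_eq rfl)
  filter_upwards [eventually_ge_atTop 1] with n hn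
  have hn0 : (0:ℝ) < (n:ℝ) := by exact_mod_cast hn
  have hnne : (n:ℂ) ≠ 0 := Nat.cast_ne_zero.mpr (by omega)
  have hzn : (n:ℂ) + z ≠ 0 := by
    have := aux_ne z hz n; rwa [add_comm] at this
  have hne : (1 + z / (n:ℂ)) ≠ 0 := by
    have heq : 1 + z / (n:ℂ) = ((n:ℂ) + z) / (n:ℂ) := by field_simp
    rw [heq]
    exact div_ne_zero hzn hnne
  have hmul : ((n:ℝ):ℂ) * (1 + z / (n:ℂ)) = (n:ℂ) + z := by
    push_cast; field_simp
  rw [← hmul, Complex.log_ofReal_mul hn0 hne, Complex.natCast_log]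
  push_cast
  ring

lemma inv_shift_tendsto (z : ℂ) (hz : 0 < z.re) :
    Tendsto (fun n : ℕ => 1 / (2 * ((n:ℂ) + z))) atTop (𝓝 0) := by
  refine squeeze_zero_norm' ?_ tendsto_one_div_atTop_nhds_zero_nat
  filter_upwards [eventually_ge_atTop 1] with n hn
  have hn0 : (0:ℝ) < (n:ℝ) := by exact_mod_cast hn
  have hre : (n:ℝ) ≤ ‖2 * ((n:ℂ) + z)‖ := by
    have h1 := Complex.re_le_norm (2 * ((n:ℂ) + z))
    have h2 : (2 * ((n:ℂ) + z)).re = 2 * (n:ℝ) + 2 * z.re := by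
      simp [Complex.mul_re, Complex.add_re]; ring
    rw [h2] at h1
    linarith
  rw [norm_div, norm_one]
  rw [one_div, one_div]
  exact inv_anti₀ hn0 hre

/-- Stirling-type formula for the digamma function: for `Re z > 0`,
`Γ'(z)/Γ(z) = log z − 1/(2z) − ∫₀^∞ (⌊t⌋ − t + 1/2)/(t+z)² dt`. -/
theorem digamma_integral_formula (z : ℂ) (hz : 0 < z.re) :
    deriv Complex.Gamma z / Complex.Gamma z =
      Complex.log z - 1 / (2 * z) -
        ∫ t in Set.Ioi (0 : ℝ), ((((⌊t⌋ : ℝ) - t + 1 / 2 : ℝ)) : ℂ) / ((t : ℂ) + z) ^ 2 := by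
  have hI := MeasureTheory.intervalIntegral_tendsto_integral_Ioi 0 (saw_integrable hz)
    tendsto_natCast_atTop_atTop
  have h1 : Tendsto (fun n : ℕ => Complex.log z - 1 / (2 * z)
        - ∫ t in (0:ℝ)..(n:ℝ), ((((⌊t⌋ : ℝ) - t + 1 / 2 : ℝ)) : ℂ) / ((t : ℂ) + z) ^ 2) atTop
      (𝓝 (Complex.log z - 1 / (2 * z) -
        ∫ t in Set.Ioi (0 : ℝ), ((((⌊t⌋ : ℝ) - t + 1 / 2 : ℝ)) : ℂ) / ((t : ℂ) + z) ^ 2)) :=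
    tendsto_const_nhds.sub hI
  have h2 : Tendsto (fun n : ℕ => Complex.log z - 1 / (2 * z)
        - ∫ t in (0:ℝ)..(n:ℝ), ((((⌊t⌋ : ℝ) - t + 1 / 2 : ℝ)) : ℂ) / ((t : ℂ) + z) ^ 2) atTop
      (𝓝 (deriv Complex.Gamma z / Complex.Gamma z)) := by
    have heq : ∀ n : ℕ, Complex.log z - 1 / (2 * z)
        - (∫ t in (0:ℝ)..(n:ℝ), ((((⌊t⌋ : ℝ) - t + 1 / 2 : ℝ)) : ℂ) / ((t : ℂ) + z) ^ 2)
        = (Complex.log n - ∑ j ∈ Finset.range (n + 1), 1 / (z + j))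
          + (Complex.log ((n:ℂ) + z) - Complex.log n) + 1 / (2 * ((n:ℂ) + z)) := by
      intro n
      rw [partial_eq hz n]
      ring
    have h3 := ((digamma_limit hz).add (log_ratio_tendsto hz)).add (inv_shift_tendsto z hz)
    simp only [add_zero] at h3
    exact (h3.congr (fun n => (heq n).symm))
  exact tendsto_nhds_unique h2 h1

end
end

section
/- For every integer n ≥ 1 and every z ∈ ℂ with Re z > 0, the n-th derivative of the digamma function f = Γ'/Γ satisfies f^{(n)}(z) = (−1)^{n−1}·{ (n−1)!/zⁿ + n!/(2z^{n+1}) + (n+1)!·∫₀^{+∞} (⌊t⌋ − t + 1/2)/(t+z)^{n+2} dt }. -/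
open MeasureTheory Filter Set Topology Complex

noncomputable def binetJ (m : ℕ) (z : ℂ) : ℂ :=
  ∫ t in Set.Ioi (0:ℝ), ((((⌊t⌋ : ℝ) - t + 1/2 : ℝ)) : ℂ) / ((t:ℂ) + z) ^ m

lemma abs_mu_le (t : ℝ) : |((⌊t⌋ : ℝ) - t + 1/2)| ≤ 1/2 := by
  have h1 := Int.sub_one_lt_floor t
  have h2 := Int.floor_le t
  rw [abs_le]; constructor <;> linarith

lemma measurable_mu : Measurable (fun t : ℝ => ((⌊t⌋ : ℝ) - t + 1/2)) := by
  apply Measurable.add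
  · exact ((measurable_from_top.comp Int.measurable_floor).sub measurable_id)
  · exact measurable_const

lemma integral_shift (f : ℝ → ℂ) (a c : ℝ) :
    ∫ t in Set.Ioi a, f (t + c) = ∫ t in Set.Ioi (a + c), f t := by
  have A : MeasurableEmbedding fun x : ℝ => x + c :=
    (Homeomorph.addRight c).isClosedEmbedding.measurableEmbedding
  conv_rhs => rw [show (volume : Measure ℝ) = Measure.map (fun x => x + c) volume from
    (map_add_right_eq_self volume c).symm]
  rw [A.setIntegral_map, preimage_add_const_Ioi, add_sub_cancel_right]

lemma integrableOn_shift {E : Type*} [NormedAddCommGroup E] (f : ℝ → E) {a c : ℝ}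
    (h : IntegrableOn f (Set.Ioi (a + c))) :
    IntegrableOn (fun t => f (t + c)) (Set.Ioi a) := by
  have A : MeasurableEmbedding fun x : ℝ => x + c :=
    (Homeomorph.addRight c).isClosedEmbedding.measurableEmbedding
  rw [show (volume : Measure ℝ) = Measure.map (fun x => x + c) volume from
    (map_add_right_eq_self volume c).symm] at h
  have := (A.integrableOn_map_iff).mp h
  simpa [preimage_add_const_Ioi, Function.comp_def] using this

lemma integrableOn_inv_pow {m : ℕ} (hm : 2 ≤ m) {c : ℝ} (hc : 0 < c) :
    IntegrableOn (fun t : ℝ => ((t + c) ^ m)⁻¹) (Set.Ioi (0:ℝ)) := by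
  have h1 : IntegrableOn (fun t : ℝ => t ^ (-(m:ℝ))) (Set.Ioi c) := by
    apply integrableOn_Ioi_rpow_of_lt _ hc
    have : (2:ℝ) ≤ m := by exact_mod_cast hm
    linarith
  have h2 := integrableOn_shift (a := 0) (fun t : ℝ => t ^ (-(m:ℝ))) (by simpa using h1)
  apply h2.congr_fun _ measurableSet_Ioi
  intro t ht
  simp only [mem_Ioi] at ht
  simp only []
  rw [Real.rpow_neg (by linarith), Real.rpow_natCast]

lemma norm_binet_term_le (m : ℕ) {z : ℂ} (hz : 0 < z.re) {t : ℝ} (ht : 0 < t) :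
    ‖(((⌊t⌋ : ℝ) - t + 1/2 : ℝ) : ℂ) / ((t:ℂ) + z) ^ m‖ ≤ (1/2) * ((t + z.re) ^ m)⁻¹ := by
  have hre : 0 < t + z.re := by linarith
  have habs : t + z.re ≤ ‖(t:ℂ) + z‖ := by
    have := Complex.re_le_norm ((t:ℂ) + z)
    simpa using this
  rw [norm_div, norm_pow, Complex.norm_real]
  have h1 : (t + z.re) ^ m ≤ ‖(t:ℂ) + z‖ ^ m := pow_le_pow_left₀ hre.le habs m
  calc |((⌊t⌋ : ℝ) - t + 1/2)| / ‖(t:ℂ) + z‖ ^ m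
      ≤ (1/2) / (t + z.re) ^ m :=
        div_le_div₀ (by positivity) (abs_mu_le t) (by positivity) h1
    _ = (1/2) * ((t + z.re) ^ m)⁻¹ := by rw [div_eq_mul_inv]

lemma aesm_binet_term (m : ℕ) (z : ℂ) :
    AEStronglyMeasurable (fun t : ℝ => (((⌊t⌋ : ℝ) - t + 1/2 : ℝ) : ℂ) / ((t:ℂ) + z) ^ m)
      (volume.restrict (Set.Ioi (0:ℝ))) := by
  apply Measurable.aestronglyMeasurable
  exact (Complex.measurable_ofReal.comp measurable_mu).div
    ((Complex.measurable_ofReal.add_const z).pow_const m)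

lemma integrableOn_binet_term {m : ℕ} (hm : 2 ≤ m) {z : ℂ} (hz : 0 < z.re) :
    IntegrableOn (fun t : ℝ => (((⌊t⌋ : ℝ) - t + 1/2 : ℝ) : ℂ) / ((t:ℂ) + z) ^ m)
      (Set.Ioi (0:ℝ)) := by
  apply Integrable.mono' ((integrableOn_inv_pow hm hz).const_mul (1/2)) (aesm_binet_term m z)
  filter_upwards [ae_restrict_mem measurableSet_Ioi] with t ht
  exact norm_binet_term_le m hz ht

lemma hasDerivAt_c_div (c a : ℂ) (k : ℕ) {w : ℂ} (h : a + w ≠ 0) :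
    HasDerivAt (fun w => c / (a + w) ^ (k+1)) (-(k+1) * c / (a + w) ^ (k+2)) w := by
  have h1 : HasDerivAt (fun w : ℂ => (a + w) ^ (k+1)) (((k:ℂ)+1) * (a+w)^k) w := by
    have := ((hasDerivAt_id w).const_add a).pow (k+1)
    simpa [Pi.pow_def] using this
  have h3 := (h1.inv (pow_ne_zero _ h)).const_mul c
  have h4 : HasDerivAt (fun w => c / (a + w) ^ (k+1))
      (c * (-(((k:ℂ)+1) * (a+w)^k) / ((a + w) ^ (k+1)) ^ 2)) w := by
    refine h3.congr_of_eventuallyEq ?_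
    filter_upwards with x using by rw [div_eq_mul_inv]; rfl
  refine h4.congr_deriv ?_
  field_simp
  ring

lemma hasDerivAt_binetJ (k : ℕ) {z : ℂ} (hz : 0 < z.re) :
    HasDerivAt (binetJ (k+2)) (-((k:ℂ)+2) * binetJ (k+3) z) z := by
  have hε : 0 < z.re / 2 := by linarith
  have hball : ∀ w ∈ Metric.ball z (z.re/2), z.re/2 < w.re := by
    intro w hw
    have : |w.re - z.re| ≤ dist w z := by
      rw [Complex.dist_eq, ← Complex.sub_re]
      exact Complex.abs_re_le_norm _
    rw [Metric.mem_ball] at hw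
    have := abs_le.mp this
    linarith [this.1, hw]
  have key := hasDerivAt_integral_of_dominated_loc_of_deriv_le
    (μ := volume.restrict (Set.Ioi (0:ℝ)))
    (F := fun w t => (((⌊t⌋ : ℝ) - t + 1/2 : ℝ) : ℂ) / ((t:ℂ) + w) ^ (k+2))
    (F' := fun w t => -((k:ℂ)+2) * ((((⌊t⌋ : ℝ) - t + 1/2 : ℝ) : ℂ) / ((t:ℂ) + w) ^ (k+3)))
    (x₀ := z)
    (bound := fun t => ((k:ℝ)+2) * ((1/2) * ((t + z.re/2) ^ (k+3))⁻¹))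
    (Metric.ball_mem_nhds z hε) ?_ ?_ ?_ ?_ ?_ ?_
  · have h2 : HasDerivAt (fun w => ∫ t in Set.Ioi (0:ℝ),
        (((⌊t⌋ : ℝ) - t + 1/2 : ℝ) : ℂ) / ((t:ℂ) + w) ^ (k+2))
        (∫ t in Set.Ioi (0:ℝ),
          -((k:ℂ)+2) * ((((⌊t⌋ : ℝ) - t + 1/2 : ℝ) : ℂ) / ((t:ℂ) + z) ^ (k+3))) z := key.2
    have : (∫ t in Set.Ioi (0:ℝ),
          -((k:ℂ)+2) * ((((⌊t⌋ : ℝ) - t + 1/2 : ℝ) : ℂ) / ((t:ℂ) + z) ^ (k+3)))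
        = -((k:ℂ)+2) * binetJ (k+3) z := integral_const_mul _ _
    rw [this] at h2
    exact h2
  · filter_upwards with w using aesm_binet_term (k+2) w
  · exact integrableOn_binet_term (by omega) hz
  · exact (aesm_binet_term (k+3) z).const_mul _
  · filter_upwards [ae_restrict_mem measurableSet_Ioi] with t ht w hw
    have hwre := hball w hw
    have ht' : (0:ℝ) < t := ht
    rw [norm_mul]
    have h1 : ‖(((⌊t⌋ : ℝ) - t + 1/2 : ℝ) : ℂ) / ((t:ℂ) + w) ^ (k+3)‖
        ≤ (1/2) * ((t + w.re) ^ (k+3))⁻¹ := norm_binet_term_le (k+3) (by linarith) ht'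
    have h2 : ((t + w.re) ^ (k+3) : ℝ)⁻¹ ≤ ((t + z.re/2) ^ (k+3))⁻¹ := by
      apply inv_anti₀ (by positivity)
      exact pow_le_pow_left₀ (by linarith) (by linarith) _
    have h3 : ‖-((k:ℂ)+2)‖ = (k:ℝ)+2 := by
      rw [norm_neg]
      have hcast : ((k:ℂ)+2) = ((k+2 : ℕ) : ℂ) := by push_cast; ring
      rw [hcast, Complex.norm_natCast]
      push_cast; ring
    calc ‖-((k:ℂ)+2)‖ * ‖(((⌊t⌋ : ℝ) - t + 1/2 : ℝ) : ℂ) / ((t:ℂ) + w) ^ (k+3)‖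
        ≤ ((k:ℝ)+2) * ((1/2) * ((t + z.re/2) ^ (k+3))⁻¹) := by
          rw [h3]
          apply mul_le_mul_of_nonneg_left _ (by positivity)
          exact h1.trans (by apply mul_le_mul_of_nonneg_left h2 (by norm_num))
    _ = ((k:ℝ)+2) * ((1/2) * ((t + z.re/2) ^ (k+3))⁻¹) := rfl
  · exact ((integrableOn_inv_pow (by omega) hε).const_mul _).const_mul _
  · filter_upwards [ae_restrict_mem measurableSet_Ioi] with t ht w hw
    have hwre := hball w hw
    have ht' : (0:ℝ) < t := ht
    have hne : (t:ℂ) + w ≠ 0 := by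
      intro hc
      have : ((t:ℂ) + w).re = 0 := by rw [hc]; simp
      simp only [Complex.add_re, Complex.ofReal_re] at this
      linarith
    have := hasDerivAt_c_div (((⌊t⌋ : ℝ) - t + 1/2 : ℝ) : ℂ) (t:ℂ) (k+1) hne
    refine this.congr_deriv ?_
    push_cast
    ring

lemma ne_zero_of_re_pos' {z : ℂ} (hz : 0 < z.re) : z ≠ 0 := by
  intro h; rw [h] at hz; simp at hz

lemma binetJ_shift {z : ℂ} (hz : 0 < z.re) :
    binetJ 2 (z + 1) = ∫ t in Set.Ioi (1:ℝ), (((⌊t⌋ : ℝ) - t + 1/2 : ℝ) : ℂ) / ((t:ℂ) + z) ^ 2 := by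
  have hcongr : (∫ t in Set.Ioi (0:ℝ), (((⌊t⌋ : ℝ) - t + 1/2 : ℝ) : ℂ) / ((t:ℂ) + (z+1)) ^ 2)
      = ∫ t in Set.Ioi (0:ℝ),
        (fun s : ℝ => (((⌊s⌋ : ℝ) - s + 1/2 : ℝ) : ℂ) / ((s:ℂ) + z) ^ 2) (t + 1) := by
    apply setIntegral_congr_fun measurableSet_Ioi
    intro t _
    have hfloor : (⌊t + 1⌋ : ℤ) = ⌊t⌋ + 1 := by
      rw [show t + 1 = t + (1:ℤ) by push_cast; ring, Int.floor_add_intCast]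
    simp only [hfloor]
    push_cast
    ring_nf
  rw [binetJ, hcongr,
    integral_shift (fun s : ℝ => (((⌊s⌋ : ℝ) - s + 1/2 : ℝ) : ℂ) / ((s:ℂ) + z) ^ 2) 0 1, zero_add]

lemma binetJ_split {z : ℂ} (hz : 0 < z.re) :
    binetJ 2 z = (∫ t in Set.Ioc (0:ℝ) 1, (((⌊t⌋ : ℝ) - t + 1/2 : ℝ) : ℂ) / ((t:ℂ) + z) ^ 2)
      + ∫ t in Set.Ioi (1:ℝ), (((⌊t⌋ : ℝ) - t + 1/2 : ℝ) : ℂ) / ((t:ℂ) + z) ^ 2 := by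
  have hint := integrableOn_binet_term (le_refl 2) hz
  rw [binetJ, ← setIntegral_union (Set.Ioc_disjoint_Ioi (le_refl 1)) measurableSet_Ioi
    (hint.mono_set Set.Ioc_subset_Ioi_self) (hint.mono_set (Set.Ioi_subset_Ioi (by norm_num)))]
  rw [Set.Ioc_union_Ioi_eq_Ioi (by norm_num)]

lemma hasDerivAt_FTC_aux {z : ℂ} (hz : 0 < z.re) {t : ℝ} (ht : 0 ≤ t) :
    HasDerivAt (fun s : ℝ => -(z + 1/2) * ((s:ℂ) + z)⁻¹ - Complex.log ((s:ℂ) + z))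
      (((1/2 - t : ℝ) : ℂ) / ((t:ℂ) + z) ^ 2) t := by
  have hne : (t:ℂ) + z ≠ 0 := by
    intro h
    have : ((t:ℂ) + z).re = 0 := by rw [h]; simp
    simp only [Complex.add_re, Complex.ofReal_re] at this
    linarith
  have h1 : HasDerivAt (fun w : ℂ => w + z) 1 (t:ℂ) := (hasDerivAt_id _).add_const z
  have h2 := (h1.inv hne).const_mul (-(z + 1/2))
  have hmem : ((t:ℂ) + z) ∈ Complex.slitPlane := by
    rw [Complex.mem_slitPlane_iff]
    left
    simp only [Complex.add_re, Complex.ofReal_re]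
    linarith
  have h4 := (Complex.hasDerivAt_log hmem).comp (t:ℂ) h1
  have h5 := (h2.sub h4).comp_ofReal (z := t)
  refine h5.congr_deriv ?_
  field_simp
  push_cast
  ring

lemma integral_Ioc_eval {z : ℂ} (hz : 0 < z.re) :
    (∫ t in Set.Ioc (0:ℝ) 1, (((⌊t⌋ : ℝ) - t + 1/2 : ℝ) : ℂ) / ((t:ℂ) + z) ^ 2)
      = (z + 1/2) * (1/z - 1/(z+1)) - (Complex.log (z+1) - Complex.log z) := by
  have hstep1 : (∫ t in Set.Ioc (0:ℝ) 1, (((⌊t⌋ : ℝ) - t + 1/2 : ℝ) : ℂ) / ((t:ℂ) + z) ^ 2)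
      = ∫ t in Set.Ioc (0:ℝ) 1, ((1/2 - t : ℝ) : ℂ) / ((t:ℂ) + z) ^ 2 := by
    rw [integral_Ioc_eq_integral_Ioo, integral_Ioc_eq_integral_Ioo]
    apply setIntegral_congr_fun measurableSet_Ioo
    intro t ht
    have hfl : ⌊t⌋ = 0 := Int.floor_eq_zero_iff.mpr ⟨ht.1.le, ht.2⟩
    simp only [hfl]
    push_cast
    ring_nf
  have hstep2 : (∫ t in Set.Ioc (0:ℝ) 1, ((1/2 - t : ℝ) : ℂ) / ((t:ℂ) + z) ^ 2)
      = ∫ t in (0:ℝ)..1, ((1/2 - t : ℝ) : ℂ) / ((t:ℂ) + z) ^ 2 := by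
    rw [intervalIntegral.integral_of_le zero_le_one]
  have hcont : ContinuousOn (fun t : ℝ => ((1/2 - t : ℝ) : ℂ) / ((t:ℂ) + z) ^ 2)
      (Set.uIcc (0:ℝ) 1) := by
    apply ContinuousOn.div
    · fun_prop
    · fun_prop
    · intro t ht
      rw [Set.uIcc_of_le zero_le_one] at ht
      apply pow_ne_zero
      intro h
      have : ((t:ℂ) + z).re = 0 := by rw [h]; simp
      simp only [Complex.add_re, Complex.ofReal_re] at this
      have := ht.1
      linarith
  have hftc := intervalIntegral.integral_eq_sub_of_hasDerivAt
    (f := fun s : ℝ => -(z + 1/2) * ((s:ℂ) + z)⁻¹ - Complex.log ((s:ℂ) + z))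
    (f' := fun t : ℝ => ((1/2 - t : ℝ) : ℂ) / ((t:ℂ) + z) ^ 2)
    (a := 0) (b := 1)
    (fun t ht => by
      rw [Set.uIcc_of_le zero_le_one] at ht
      exact hasDerivAt_FTC_aux hz ht.1)
    (hcont.intervalIntegrable)
  rw [hstep1, hstep2, hftc]
  have hzne : z ≠ 0 := ne_zero_of_re_pos' hz
  have hz1ne : z + 1 ≠ 0 := ne_zero_of_re_pos' (by simp only [Complex.add_re, Complex.one_re]; linarith)
  push_cast
  rw [show (1:ℂ) + z = z + 1 by ring, show Complex.log (0 + z) = Complex.log z by rw [zero_add]]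
  field_simp
  have hzi : z * z⁻¹ = 1 := mul_inv_cancel₀ hzne
  linear_combination (1 + 3*z + 2*z^2) * hzi

noncomputable def phiB (z : ℂ) : ℂ := Complex.log z - 1/(2*z) - binetJ 2 z

noncomputable def psiD (z : ℂ) : ℂ := deriv Complex.Gamma z / Complex.Gamma z

lemma phiB_add_one {z : ℂ} (hz : 0 < z.re) : phiB (z + 1) = phiB z + 1/z := by
  have hJ : binetJ 2 (z+1) = binetJ 2 z -
      ((z + 1/2) * (1/z - 1/(z+1)) - (Complex.log (z+1) - Complex.log z)) := by
    rw [binetJ_shift hz, binetJ_split hz, integral_Ioc_eval hz]; ring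
  have hzne : z ≠ 0 := ne_zero_of_re_pos' hz
  have hz1ne : z + 1 ≠ 0 :=
    ne_zero_of_re_pos' (by simp only [Complex.add_re, Complex.one_re]; linarith)
  unfold phiB
  rw [hJ]
  field_simp
  ring

lemma ne_neg_nat {z : ℂ} (hz : 0 < z.re) (m : ℕ) : z ≠ -m := by
  intro h
  have : z.re = -(m:ℝ) := by rw [h]; simp
  rw [this] at hz
  have : (0:ℝ) ≤ m := Nat.cast_nonneg m
  linarith

lemma psiD_add_one {z : ℂ} (hz : 0 < z.re) : psiD (z + 1) = psiD z + 1/z := by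
  have hzne : z ≠ 0 := ne_zero_of_re_pos' hz
  have hz1 : 0 < (z+1).re := by simp only [Complex.add_re, Complex.one_re]; linarith
  have hG : Complex.Gamma z ≠ 0 := Complex.Gamma_ne_zero_of_re_pos hz
  have hd : DifferentiableAt ℂ Complex.Gamma z :=
    Complex.differentiableAt_Gamma z (ne_neg_nat hz)
  have hd1 : DifferentiableAt ℂ Complex.Gamma (z+1) :=
    Complex.differentiableAt_Gamma _ (ne_neg_nat hz1)
  have hmul : HasDerivAt (fun w => w * Complex.Gamma w)
      (Complex.Gamma z + z * deriv Complex.Gamma z) z := by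
    have := (hasDerivAt_id z).mul hd.hasDerivAt
    simpa [add_comm, Pi.mul_def] using this
  have hcomp : HasDerivAt (fun w => Complex.Gamma (w + 1)) (deriv Complex.Gamma (z+1)) z :=
    HasDerivAt.comp_add_const z 1 hd1.hasDerivAt
  have heq : (fun w => Complex.Gamma (w + 1)) =ᶠ[nhds z] (fun w => w * Complex.Gamma w) := by
    filter_upwards [IsOpen.mem_nhds isOpen_ne (hzne : z ≠ 0)] with w hw
    exact Complex.Gamma_add_one w hw
  have huniq : deriv Complex.Gamma (z+1) = Complex.Gamma z + z * deriv Complex.Gamma z :=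
    (hcomp.congr_of_eventuallyEq heq.symm).unique hmul
  unfold psiD
  rw [huniq, Complex.Gamma_add_one z hzne]
  field_simp
  ring

lemma analyticOnNhd_Gamma :
    AnalyticOnNhd ℂ Complex.Gamma {z : ℂ | 0 < z.re} := by
  apply DifferentiableOn.analyticOnNhd _ (isOpen_lt continuous_const Complex.continuous_re)
  intro w hw
  exact (Complex.differentiableAt_Gamma w (ne_neg_nat hw)).differentiableWithinAt

lemma differentiableAt_psiD {z : ℂ} (hz : 0 < z.re) : DifferentiableAt ℂ psiD z := by
  have h1 : DifferentiableAt ℂ (deriv Complex.Gamma) z :=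
    ((analyticOnNhd_Gamma.deriv) z hz).differentiableAt
  exact h1.div (Complex.differentiableAt_Gamma z (ne_neg_nat hz))
    (Complex.Gamma_ne_zero_of_re_pos hz)

lemma hasDerivAt_c_div' (c : ℂ) (k : ℕ) {w : ℂ} (h : w ≠ 0) :
    HasDerivAt (fun w => c / w ^ (k+1)) (-((k:ℂ)+1) * c / w ^ (k+2)) w := by
  have h0 := hasDerivAt_c_div c 0 k (by simpa using h)
  simp only [zero_add] at h0
  exact h0

lemma hasDerivAt_phiB {z : ℂ} (hz : 0 < z.re) :
    HasDerivAt phiB (z⁻¹ + 1/(2*z^2) + 2 * binetJ 3 z) z := by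
  have hzne : z ≠ 0 := ne_zero_of_re_pos' hz
  have hlog := Complex.hasDerivAt_log (Complex.mem_slitPlane_iff.mpr (Or.inl hz))
  have hX : HasDerivAt (fun w : ℂ => 1/(2*w)) (-(((0:ℕ):ℂ)+1) * (1/2) / z ^ (0+2)) z := by
    apply (hasDerivAt_c_div' (1/2) 0 hzne).congr_of_eventuallyEq
    filter_upwards with w
    rw [pow_one, div_div]
  have hJ := hasDerivAt_binetJ 0 hz
  have hsum := (hlog.sub hX).sub hJ
  refine (hsum.congr_of_eventuallyEq ?_).congr_deriv ?_
  · filter_upwards with w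
    rfl
  · push_cast
    ring

lemma differentiableAt_phiB {z : ℂ} (hz : 0 < z.re) : DifferentiableAt ℂ phiB z :=
  (hasDerivAt_phiB hz).differentiableAt

lemma real_ne_neg_nat {y : ℝ} (hy : 0 < y) : ∀ m : ℕ, y ≠ -(m:ℝ) := by
  intro m h
  have : (0:ℝ) ≤ m := Nat.cast_nonneg m
  rw [h] at hy
  linarith

lemma deriv_logGamma_eq {y : ℝ} (hy : 0 < y) :
    deriv (Real.log ∘ Real.Gamma) y = deriv Real.Gamma y / Real.Gamma y := by
  rw [Function.comp_def, deriv.log (Real.differentiableAt_Gamma (real_ne_neg_nat hy))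
    (Real.Gamma_pos_of_pos hy).ne']

lemma real_digamma_bounds {y : ℝ} (hy : 1 < y) :
    Real.log (y - 1) ≤ deriv Real.Gamma y / Real.Gamma y ∧
      deriv Real.Gamma y / Real.Gamma y ≤ Real.log y := by
  have hc := Real.convexOn_log_Gamma
  have hder : ∀ {x : ℝ}, 0 < x → DifferentiableAt ℝ (Real.log ∘ Real.Gamma) x := by
    intro x hx
    rw [Function.comp_def]
    exact (Real.differentiableAt_Gamma (real_ne_neg_nat hx)).log (Real.Gamma_pos_of_pos hx).ne'
  have hrec : ∀ x : ℝ, 0 < x → (Real.log ∘ Real.Gamma) (x + 1)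
      = (Real.log ∘ Real.Gamma) x + Real.log x := by
    intro x hx
    simp only [Function.comp_apply, Real.Gamma_add_one hx.ne',
      Real.log_mul hx.ne' (Real.Gamma_pos_of_pos hx).ne']
    ring
  have hy0 : (0:ℝ) < y := by linarith
  have hym : (0:ℝ) < y - 1 := by linarith
  constructor
  · have h1 := hc.slope_le_deriv (Set.mem_Ioi.mpr hym) (Set.mem_Ioi.mpr hy0)
      (by linarith) (hder hy0)
    have hval : (Real.log ∘ Real.Gamma) y
        = (Real.log ∘ Real.Gamma) (y - 1) + Real.log (y - 1) := by
      have := hrec (y - 1) hym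
      rwa [sub_add_cancel] at this
    rw [slope_def_field, hval, show y - (y - 1) = 1 by ring, div_one, add_sub_cancel_left] at h1
    rwa [deriv_logGamma_eq hy0] at h1
  · have h1 := hc.deriv_le_slope (Set.mem_Ioi.mpr hy0)
      (Set.mem_Ioi.mpr (by linarith : (0:ℝ) < y + 1)) (by linarith) (hder hy0)
    rw [slope_def_field, hrec y hy0, show y + 1 - y = 1 by ring, div_one,
      add_sub_cancel_left] at h1
    rwa [deriv_logGamma_eq hy0] at h1

lemma tendsto_digammaR_sub_log :
    Tendsto (fun y : ℝ => deriv Real.Gamma y / Real.Gamma y - Real.log y) atTop (𝓝 0) := by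
  have h0 : Tendsto (fun y : ℝ => Real.log ((y-1)/y)) atTop (𝓝 0) := by
    have h1 : Tendsto (fun y : ℝ => (y-1)/y) atTop (𝓝 1) := by
      have : ∀ᶠ y : ℝ in atTop, (y-1)/y = 1 - 1/y := by
        filter_upwards [eventually_gt_atTop 0] with y hy
        field_simp
      rw [tendsto_congr' this]
      have := tendsto_one_div_atTop_nhds_zero_nat (𝕜 := ℝ)
      have h2 : Tendsto (fun y : ℝ => 1 - 1/y) atTop (𝓝 (1 - 0)) :=
        tendsto_const_nhds.sub (tendsto_inv_atTop_zero.congr (fun y => (one_div y).symm))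
      simpa using h2
    have h2 : Tendsto Real.log (𝓝 1) (𝓝 0) := by
      have := (Real.continuousAt_log one_ne_zero).tendsto
      simpa using this
    exact h2.comp h1
  apply tendsto_of_tendsto_of_tendsto_of_le_of_le' h0 tendsto_const_nhds
  · filter_upwards [eventually_gt_atTop 1] with y hy
    have hb := (real_digamma_bounds hy).1
    have : Real.log ((y-1)/y) = Real.log (y-1) - Real.log y :=
      Real.log_div (by linarith) (by linarith)
    rw [this]
    linarith
  · filter_upwards [eventually_gt_atTop 1] with y hy
    have hb := (real_digamma_bounds hy).2
    linarith

lemma psiD_ofReal {y : ℝ} (hy : 0 < y) :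
    psiD (y : ℂ) = ((deriv Real.Gamma y / Real.Gamma y : ℝ) : ℂ) := by
  have hyC : 0 < ((y:ℂ)).re := by simpa using hy
  have hdR : HasDerivAt Real.Gamma (deriv Real.Gamma y) y :=
    (Real.differentiableAt_Gamma (real_ne_neg_nat hy)).hasDerivAt
  have hdC : DifferentiableAt ℂ Complex.Gamma (y:ℂ) :=
    Complex.differentiableAt_Gamma _ (ne_neg_nat hyC)
  have h1 : HasDerivAt (fun t : ℝ => Complex.Gamma (t:ℂ)) (deriv Complex.Gamma (y:ℂ)) y :=
    hdC.hasDerivAt.comp_ofReal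
  have h2 : HasDerivAt (fun t : ℝ => Complex.Gamma (t:ℂ)) ((deriv Real.Gamma y : ℝ) : ℂ) y := by
    apply hdR.ofReal_comp.congr_of_eventuallyEq
    filter_upwards with t
    exact Complex.Gamma_ofReal t
  have heq : deriv Complex.Gamma (y:ℂ) = ((deriv Real.Gamma y : ℝ) : ℂ) := h1.unique h2
  unfold psiD
  rw [heq, Complex.Gamma_ofReal, Complex.ofReal_div]

lemma integral_shiftR (f : ℝ → ℝ) (a c : ℝ) :
    ∫ t in Set.Ioi a, f (t + c) = ∫ t in Set.Ioi (a + c), f t := by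
  have A : MeasurableEmbedding fun x : ℝ => x + c :=
    (Homeomorph.addRight c).isClosedEmbedding.measurableEmbedding
  conv_rhs => rw [show (volume : Measure ℝ) = Measure.map (fun x => x + c) volume from
    (map_add_right_eq_self volume c).symm]
  rw [A.setIntegral_map, preimage_add_const_Ioi, add_sub_cancel_right]

lemma integral_inv_sq {c : ℝ} (hc : 0 < c) :
    ∫ t in Set.Ioi (0:ℝ), ((t + c)^2)⁻¹ = c⁻¹ := by
  have h1 : ∫ t in Set.Ioi c, t ^ (-2:ℝ) = -c^((-2:ℝ)+1)/((-2:ℝ)+1) :=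
    integral_Ioi_rpow_of_lt (by norm_num) hc
  have h2 : (∫ t in Set.Ioi (0:ℝ), ((t + c)^2)⁻¹)
      = ∫ t in Set.Ioi (0:ℝ), (fun s : ℝ => s ^ (-2:ℝ)) (t + c) := by
    apply setIntegral_congr_fun measurableSet_Ioi
    intro t ht
    simp only [mem_Ioi] at ht
    have htc : (0:ℝ) < t + c := by linarith
    simp only []
    rw [Real.rpow_neg htc.le, show ((2:ℝ)) = ((2:ℕ):ℝ) by norm_num, Real.rpow_natCast]
  rw [h2, integral_shiftR (fun s : ℝ => s ^ (-2:ℝ)) 0 c, zero_add, h1]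
  rw [show (-2:ℝ)+1 = -1 by norm_num, Real.rpow_neg_one]
  field_simp

lemma norm_binetJ_le {z : ℂ} (hz : 0 < z.re) : ‖binetJ 2 z‖ ≤ (1/2) * (z.re)⁻¹ := by
  have hb : IntegrableOn (fun t : ℝ => (1/2) * ((t + z.re)^2)⁻¹) (Set.Ioi (0:ℝ)) :=
    (integrableOn_inv_pow (le_refl 2) hz).const_mul (1/2)
  have hle := norm_integral_le_of_norm_le hb (by
    filter_upwards [ae_restrict_mem measurableSet_Ioi] with t ht
    exact norm_binet_term_le 2 hz ht)
  rw [binetJ]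
  calc ‖∫ t in Set.Ioi (0:ℝ), (((⌊t⌋ : ℝ) - t + 1/2 : ℝ) : ℂ) / ((t:ℂ) + z) ^ 2‖
      ≤ ∫ t in Set.Ioi (0:ℝ), (1/2) * ((t + z.re)^2)⁻¹ := hle
  _ = (1/2) * (z.re)⁻¹ := by rw [integral_const_mul, integral_inv_sq hz]

lemma psiD_eq_phiB {z : ℂ} (hz : 0 < z.re) : psiD z = phiB z := by
  have hUopen : IsOpen {w : ℂ | 0 < w.re} := isOpen_lt continuous_const Complex.continuous_re
  set g : ℂ → ℂ := fun w => psiD w - phiB w with hg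
  have hana : AnalyticOnNhd ℂ g {w : ℂ | 0 < w.re} := by
    apply DifferentiableOn.analyticOnNhd _ hUopen
    intro w hw
    exact ((differentiableAt_psiD hw).sub (differentiableAt_phiB hw)).differentiableWithinAt
  have hperiod : ∀ w : ℂ, 0 < w.re → g (w + 1) = g w := by
    intro w hw
    simp only [hg, psiD_add_one hw, phiB_add_one hw]
    ring
  have hnat : ∀ (x : ℝ), 0 < x → ∀ n : ℕ, g ((x + n : ℝ) : ℂ) = g (x : ℂ) := by
    intro x hx n
    induction n with
    | zero => norm_num
    | succ n ih =>
      have hcast : ((x + (n+1:ℕ) : ℝ) : ℂ) = ((x + n : ℝ) : ℂ) + 1 := by push_cast; ring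
      rw [hcast, hperiod _ (by simp only [Complex.ofReal_re]; positivity), ih]
  have hgreal : ∀ (y : ℝ), 0 < y →
      g (y : ℂ) = ((deriv Real.Gamma y / Real.Gamma y - Real.log y : ℝ) : ℂ)
        + 1/(2*(y:ℂ)) + binetJ 2 (y:ℂ) := by
    intro y hy
    simp only [hg, psiD_ofReal hy]
    unfold phiB
    rw [← Complex.ofReal_log hy.le]
    push_cast
    ring
  have hzero : ∀ (x : ℝ), 0 < x → g (x : ℂ) = 0 := by
    intro x hx
    have haux : Tendsto (fun n : ℕ => x + (n:ℝ)) atTop atTop :=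
      tendsto_atTop_add_const_left _ x tendsto_natCast_atTop_atTop
    have hA : Tendsto (fun n : ℕ =>
        ((deriv Real.Gamma (x+n) / Real.Gamma (x+n) - Real.log (x+n) : ℝ) : ℂ))
        atTop (𝓝 0) := by
      have h := (Complex.continuous_ofReal.tendsto 0).comp
        (tendsto_digammaR_sub_log.comp haux)
      rw [Complex.ofReal_zero] at h
      exact h
    have hB : Tendsto (fun n : ℕ => 1/(2*((x+n:ℝ):ℂ))) atTop (𝓝 0) := by
      apply squeeze_zero_norm (a := fun n : ℕ => (2*(x+n))⁻¹)
      · intro n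
        have hpos : (0:ℝ) < 2*(x+n) := by positivity
        rw [show (2*((x+n:ℝ):ℂ)) = ((2*(x+n):ℝ):ℂ) by push_cast; ring, norm_div,
          Complex.norm_real, Real.norm_eq_abs, abs_of_pos hpos]
        simp [one_div]
      · apply tendsto_inv_atTop_zero.comp
        apply Tendsto.const_mul_atTop two_pos haux
    have hC : Tendsto (fun n : ℕ => binetJ 2 ((x+n:ℝ):ℂ)) atTop (𝓝 0) := by
      apply squeeze_zero_norm (a := fun n : ℕ => (1/2) * (x+n)⁻¹)
      · intro n
        have := norm_binetJ_le (z := ((x+n:ℝ):ℂ)) (by simp only [Complex.ofReal_re]; positivity)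
        simpa using this
      · have h2 : Tendsto (fun n : ℕ => (x+(n:ℝ))⁻¹) atTop (𝓝 0) :=
          tendsto_inv_atTop_zero.comp haux
        have := h2.const_mul (1/2 : ℝ)
        simpa using this
    have hsum : Tendsto (fun n : ℕ => g ((x + n : ℝ) : ℂ)) atTop (𝓝 0) := by
      have hh := (hA.add hB).add hC
      rw [show (0:ℂ) + 0 + 0 = 0 by norm_num] at hh
      apply Tendsto.congr' _ hh
      filter_upwards with n
      exact (hgreal (x+n) (by positivity)).symm
    have hconst : Tendsto (fun n : ℕ => g ((x + n : ℝ) : ℂ)) atTop (𝓝 (g (x:ℂ))) := by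
      apply Tendsto.congr' _ tendsto_const_nhds
      filter_upwards with n
      exact (hnat x hx n).symm
    exact tendsto_nhds_unique hconst hsum
  have h1mem : (1:ℂ) ∈ {w : ℂ | 0 < w.re} := by norm_num
  have hpre : IsPreconnected {w : ℂ | 0 < w.re} := (convex_halfSpace_re_gt 0).isPreconnected
  have htend : Tendsto (fun n : ℕ => ((1 + 1/(n+1) : ℝ) : ℂ)) atTop (𝓝[≠] (1:ℂ)) := by
    apply tendsto_nhdsWithin_of_tendsto_nhds_of_eventually_within
    · have hr : Tendsto (fun n : ℕ => (1 + 1/(n+1) : ℝ)) atTop (𝓝 1) := by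
        have := tendsto_one_div_add_atTop_nhds_zero_nat (𝕜 := ℝ)
        have h2 := tendsto_const_nhds (x := (1:ℝ)) (f := atTop (α := ℕ)) |>.add this
        simpa using h2
      have h := (Complex.continuous_ofReal.tendsto 1).comp hr
      rw [Complex.ofReal_one] at h
      exact h
    · filter_upwards with n
      simp only [Set.mem_compl_iff, Set.mem_singleton_iff]
      rw [show (1:ℂ) = ((1:ℝ):ℂ) by norm_num, Complex.ofReal_inj]
      have hlt : (1:ℝ) < 1 + 1/(n+1) := lt_add_of_pos_right _ (by positivity)
      exact hlt.ne'
  have hfreq : ∃ᶠ w in nhdsWithin (1:ℂ) {(1:ℂ)}ᶜ, g w = 0 :=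
    htend.frequently (Frequently.of_forall fun n => hzero _ (by positivity))
  have heqz := hana.eqOn_zero_of_preconnected_of_frequently_eq_zero hpre h1mem hfreq
  have hz0 : g z = 0 := heqz hz
  exact sub_eq_zero.mp hz0

lemma iteratedDeriv_phiB (m : ℕ) : ∀ z : ℂ, 0 < z.re →
    iteratedDeriv (m+1) phiB z = (-1)^m * ((Nat.factorial m : ℂ)/z^(m+1)
      + (Nat.factorial (m+1) : ℂ)/(2*z^(m+2))
      + (Nat.factorial (m+2) : ℂ) * binetJ (m+3) z) := by
  have hUopen : IsOpen {w : ℂ | 0 < w.re} := isOpen_lt continuous_const Complex.continuous_re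
  induction m with
  | zero =>
    intro z hz
    rw [iteratedDeriv_one, (hasDerivAt_phiB hz).deriv]
    simp only [Nat.factorial]
    push_cast
    ring
  | succ m ih =>
    intro z hz
    have hzne : z ≠ 0 := ne_zero_of_re_pos' hz
    rw [iteratedDeriv_succ]
    have hev : deriv (iteratedDeriv (m+1) phiB) z
        = deriv (fun w => (-1)^m * ((Nat.factorial m : ℂ)/w^(m+1)
          + (Nat.factorial (m+1) : ℂ)/(2*w^(m+2))
          + (Nat.factorial (m+2) : ℂ) * binetJ (m+3) w)) z := by
      apply Filter.EventuallyEq.deriv_eq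
      filter_upwards [hUopen.mem_nhds hz] with w hw
      exact ih w hw
    rw [hev]
    have h1 : HasDerivAt (fun w : ℂ => (Nat.factorial m : ℂ)/w^(m+1))
        (-((m:ℂ)+1) * (Nat.factorial m : ℂ) / z^(m+2)) z :=
      hasDerivAt_c_div' _ m hzne
    have h2 : HasDerivAt (fun w : ℂ => (Nat.factorial (m+1) : ℂ)/(2*w^(m+2)))
        (-((m:ℂ)+2) * ((Nat.factorial (m+1) : ℂ)/2) / z^(m+3)) z := by
      have h0 := hasDerivAt_c_div' ((Nat.factorial (m+1) : ℂ)/2) (m+1) hzne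
      have hcast : ((m+1 : ℕ):ℂ) + 1 = (m:ℂ) + 2 := by push_cast; ring
      rw [hcast] at h0
      apply h0.congr_of_eventuallyEq
      filter_upwards with w
      rw [div_div]
    have h3 : HasDerivAt (fun w : ℂ => (Nat.factorial (m+2) : ℂ) * binetJ (m+3) w)
        ((Nat.factorial (m+2) : ℂ) * (-((m:ℂ)+3) * binetJ (m+4) z)) z := by
      have h0 := (hasDerivAt_binetJ (m+1) hz).const_mul ((Nat.factorial (m+2) : ℂ))
      have hcast : ((m+1 : ℕ):ℂ) + 2 = (m:ℂ) + 3 := by push_cast; ring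
      rw [show m+1+2 = m+3 from rfl, show m+1+3 = m+4 from rfl, hcast] at h0
      exact h0
    have htot := (((h1.add h2).add h3).const_mul ((-1:ℂ)^m)).deriv
    refine htot.trans ?_
    have hf1 : (Nat.factorial (m+1) : ℂ) = ((m:ℂ)+1) * (Nat.factorial m : ℂ) := by
      rw [Nat.factorial_succ]; push_cast; ring
    have hf2 : (Nat.factorial (m+2) : ℂ) = ((m:ℂ)+2) * (Nat.factorial (m+1) : ℂ) := by
      rw [show m+2 = (m+1)+1 from rfl, Nat.factorial_succ (m+1)]; push_cast; ring
    have hf3 : (Nat.factorial (m+3) : ℂ) = ((m:ℂ)+3) * (Nat.factorial (m+2) : ℂ) := by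
      rw [show m+3 = (m+2)+1 from rfl, Nat.factorial_succ (m+2)]; push_cast; ring
    rw [hf3, hf2, hf1, pow_succ]
    ring


/-- For `n ≥ 1` and `Re z > 0`, the `n`-th derivative of the digamma function `f = Γ'/Γ`
satisfies
`f^{(n)}(z) = (−1)^{n−1}·{(n−1)!/zⁿ + n!/(2z^{n+1}) + (n+1)!·∫₀^∞ (⌊t⌋−t+1/2)/(t+z)^{n+2} dt}`. -/
theorem digamma_iteratedDeriv_integral_formula (n : ℕ) (hn : 1 ≤ n) (z : ℂ) (hz : 0 < z.re) :
    iteratedDeriv n (fun w => deriv Complex.Gamma w / Complex.Gamma w) z =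
      (-1) ^ (n - 1) *
        ((Nat.factorial (n - 1) : ℂ) / z ^ n +
          (Nat.factorial n : ℂ) / (2 * z ^ (n + 1)) +
          (Nat.factorial (n + 1) : ℂ) *
            ∫ t in Set.Ioi (0 : ℝ),
              ((((⌊t⌋ : ℝ) - t + 1 / 2 : ℝ)) : ℂ) / ((t : ℂ) + z) ^ (n + 2)) := by
  obtain ⟨m, rfl⟩ : ∃ m, n = m + 1 := ⟨n - 1, (Nat.succ_pred_eq_of_pos hn).symm⟩
  have hUopen : IsOpen {w : ℂ | 0 < w.re} := isOpen_lt continuous_const Complex.continuous_re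
  have hstep : iteratedDeriv (m+1) (fun w => deriv Complex.Gamma w / Complex.Gamma w) z
      = iteratedDeriv (m+1) phiB z := by
    apply Filter.EventuallyEq.iteratedDeriv_eq
    filter_upwards [hUopen.mem_nhds hz] with w hw
    exact psiD_eq_phiB hw
  rw [hstep, iteratedDeriv_phiB m z hz]
  simp only [Nat.add_sub_cancel]
  rfl
end
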